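/- arXiv:2102.00817 — 2 statements merged into one kernel-verified Lean document; each statement's English description precedes it below -/
import Mathlib

section
/- For every natural number n and every nonzero real number α, the probabilists' Hermite polynomials satisfy the scaling identity H_n(α·x) = α^n · Σ_{m=0}^{⌊n/2⌋} (1 - α^{-2})^m · D_n^m · H_{n-2m}(x), where D_n^m = n!/((n-2m)!·2^m·m!). -/
open Nat Polynomial

/-- `D n k = n!/((n-2k)! 2^k k!)`. -/
def D (n k : ℕ) : ℕ := n ! / ((n - 2 * k)! * 2 ^ k * k !)

lemma fact_two_mul (m : ℕ) : (2 * m)! = 2 ^ m * m ! * (2 * m - 1)‼ := by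
  cases m with
  | zero => simp
  | succ m =>
    rw [show 2 * (m+1) = (2*m+1) + 1 by ring, Nat.factorial_eq_mul_doubleFactorial,
      show 2*m+1+1 = 2*(m+1) by ring, Nat.doubleFactorial_two_mul,
      show 2*(m+1)-1 = 2*m+1 by omega]

lemma D_eq {n m : ℕ} (h : 2 * m ≤ n) : D n m = n.choose (2 * m) * (2 * m - 1)‼ := by
  have key : n ! = n.choose (2*m) * (2*m-1)‼ * ((n - 2*m)! * 2 ^ m * m !) := by
    calc n ! = n.choose (2*m) * (2*m)! * (n - 2*m)! :=
          (Nat.choose_mul_factorial_mul_factorial h).symm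
      _ = n.choose (2*m) * (2 ^ m * m ! * (2*m-1)‼) * (n - 2*m)! := by rw [fact_two_mul]
      _ = _ := by ring
  rw [D, key, Nat.mul_div_cancel]
  positivity

lemma dfact_cast (j : ℕ) : ((2 * j - 1)‼ : ℝ) = (2 * j)! / (2 ^ j * j !) := by
  have h := fact_two_mul j
  have hj : (2:ℝ) ^ j * (j ! : ℝ) ≠ 0 := by positivity
  field_simp
  exact_mod_cast (by rw [h]; ring : (2*j-1)‼ * 2 ^ j * j ! = (2*j)!)

lemma key (k j m : ℕ) (hm : m ≤ j) :
    ((j.choose m : ℝ)) * ((2 * j - 1)‼ : ℝ) * (((k + 2 * j).choose k : ℝ)) =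
      (D (k + 2 * j) m : ℝ) * ((2 * (j - m) - 1)‼ : ℝ) * (((k + 2 * (j - m)).choose k : ℝ)) := by
  rw [D_eq (by omega)]
  push_cast
  rw [Nat.cast_choose ℝ hm, Nat.cast_choose ℝ (show k ≤ k + 2*j by omega),
    Nat.cast_choose ℝ (show 2*m ≤ k + 2*j by omega),
    Nat.cast_choose ℝ (show k ≤ k + 2*(j-m) by omega),
    dfact_cast j, dfact_cast m, dfact_cast (j-m),
    show k + 2*j - k = 2*j by omega, show k + 2*j - 2*m = k + 2*(j-m) by omega,
    show k + 2*(j-m) - k = 2*(j-m) by omega]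
  have h2 : (2:ℝ) ^ j = 2 ^ m * 2 ^ (j - m) := by rw [← pow_add]; congr 1; omega
  have f1 : (j ! : ℝ) ≠ 0 := by positivity
  have f2 : (m ! : ℝ) ≠ 0 := by positivity
  have f3 : ((j-m)! : ℝ) ≠ 0 := by positivity
  have f4 : ((2*j)! : ℝ) ≠ 0 := by positivity
  have f5 : ((2*m)! : ℝ) ≠ 0 := by positivity
  have f6 : ((2*(j-m))! : ℝ) ≠ 0 := by positivity
  have f7 : (k ! : ℝ) ≠ 0 := by positivity
  have f8 : ((k+2*(j-m))! : ℝ) ≠ 0 := by positivity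
  field_simp
  rw [h2]

lemma coeff_comp_C_mul_X (p : ℝ[X]) (a : ℝ) (k : ℕ) :
    (p.comp (C a * X)).coeff k = a ^ k * p.coeff k := by
  induction p using Polynomial.induction_on' with
  | add p q hp hq => simp [add_comp, hp, hq, mul_add]
  | monomial n b =>
    rw [monomial_comp]
    rw [mul_pow, ← C_pow, ← mul_assoc, ← C_mul]
    rw [coeff_C_mul, coeff_X_pow, coeff_monomial]
    by_cases h : n = k
    · subst h; simp [mul_comm]
    · simp [h, Ne.symm h]

theorem hermite_scaling (n : ℕ) (α : ℝ) (hα : α ≠ 0) :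
    ((hermite n).map (Int.castRingHom ℝ)).comp (C α * X) =
      C (α ^ n) * ∑ m ∈ Finset.range (n / 2 + 1),
        C ((1 - (α ^ 2)⁻¹) ^ m * (D n m : ℝ)) *
          (hermite (n - 2 * m)).map (Int.castRingHom ℝ) := by
  set c : ℝ := 1 - (α ^ 2)⁻¹ with hc
  ext k
  rw [coeff_comp_C_mul_X, coeff_C_mul, finset_sum_coeff]
  simp only [coeff_C_mul, coeff_map, eq_intCast]
  by_cases hk : n < k
  · rw [coeff_hermite_of_lt hk, Finset.sum_eq_zero]
    · simp
    · intro m hm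
      rw [coeff_hermite_of_lt (show n - 2*m < k by omega)]
      simp
  push_neg at hk
  rcases Nat.even_or_odd (n + k) with he | ho
  · -- even case
    have he2 : (n + k) % 2 = 0 := Nat.even_iff.mp he
    obtain ⟨j, rfl⟩ : ∃ j, n = k + 2 * j := ⟨(n - k) / 2, by omega⟩
    have hjle : Finset.range (j + 1) ⊆ Finset.range ((k + 2 * j) / 2 + 1) :=
      Finset.range_subset_range.mpr (by omega)
    rw [← Finset.sum_subset hjle (by
      intro m hmem hm
      rw [Finset.mem_range] at hmem
      rw [Finset.mem_range, not_lt] at hm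
      rw [coeff_hermite_of_lt (show k + 2*j - 2*m < k by omega)]
      simp)]
    have hterm : ∀ m, m ≤ j → ((hermite (k + 2*j - 2*m)).coeff k : ℝ) =
        (-1) ^ (j - m) * ((2*(j-m) - 1)‼ : ℝ) * (((k + 2*(j-m)).choose k : ℝ)) := by
      intro m hm
      rw [show k + 2*j - 2*m = k + 2*(j-m) by omega,
        coeff_hermite_of_even_add (by rw [Nat.even_iff]; omega)]
      push_cast
      rw [show k + 2*(j-m) - k = 2*(j-m) by omega, Nat.mul_div_cancel_left _ two_pos]
    have h0 : ((hermite (k + 2*j)).coeff k : ℝ) =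
        (-1) ^ j * ((2*j - 1)‼ : ℝ) * (((k + 2*j).choose k : ℝ)) := by
      have := hterm 0 (Nat.zero_le j)
      simpa using this
    have hone : (1 : ℝ) - c = (α ^ 2)⁻¹ := by rw [hc]; ring
    have hαk : α ^ k = α ^ (k + 2*j) * (1 - c) ^ j := by
      rw [hone, pow_add, mul_assoc, pow_mul, ← mul_pow,
        mul_inv_cancel₀ (pow_ne_zero 2 hα), one_pow, mul_one]
    have hexp : ((1:ℝ) - c) ^ j = ∑ m ∈ Finset.range (j+1),
        (-c) ^ m * 1 ^ (j - m) * (j.choose m : ℝ) := by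
      rw [show (1:ℝ) - c = -c + 1 by ring, add_pow]
    rw [hαk, mul_assoc, hexp, h0, Finset.sum_mul, Finset.mul_sum, Finset.mul_sum]
    refine Finset.sum_congr rfl fun m hm' => ?_
    rw [Finset.mem_range] at hm'
    have hm : m ≤ j := by omega
    rw [hterm m hm, neg_pow, one_pow]
    have hsign : (-1 : ℝ) ^ m * (-1) ^ j = (-1) ^ (j - m) := by
      rw [← pow_add, show m + j = 2*m + (j - m) by omega, pow_add, pow_mul]
      simp
    linear_combination (α ^ (k + 2*j) * c ^ m * (-1:ℝ) ^ (j - m)) * key k j m hm +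
      (α ^ (k + 2*j) * c ^ m * (j.choose m : ℝ) * ((2*j - 1)‼ : ℝ) *
        (((k + 2*j).choose k : ℝ))) * hsign
  · -- odd case
    rw [coeff_hermite_of_odd_add ho, Finset.sum_eq_zero]
    · simp
    · intro m hm
      rw [Finset.mem_range] at hm
      have : Odd (n - 2*m + k) := by
        rw [Nat.odd_iff] at ho ⊢; omega
      rw [coeff_hermite_of_odd_add this]
      simp
end

section
/- For every natural number n ≥ 0 and every natural number m with 1 ≤ m ≤ ⌊n/2⌋, the inversion identity Σ_{k=0}^{m} (-1)^k · D_n^k · D_{n-2k}^{m-k} = 0 holds, where D_n^k = n!/((n-2k)!·2^k·k!). (Equivalently, the explicit Hermite-to-monomial and monomial-to-Hermite expansions are mutually inverse.) -/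
open Nat

lemma two_pow_mul_factorial_dvd (k : ℕ) : 2 ^ k * k ! ∣ (2 * k)! := by
  induction k with
  | zero => simp
  | succ k ih =>
    have h : 2 * (k + 1) = (2 * k + 1) + 1 := by ring
    rw [h, Nat.factorial_succ, Nat.factorial_succ, pow_succ, Nat.factorial_succ]
    calc 2 ^ k * 2 * ((k + 1) * k !) = (2 * (k + 1)) * (2 ^ k * k !) := by ring
    _ ∣ (2 * (k + 1)) * (2 * k)! := mul_dvd_mul_left _ ih
    _ ∣ (2 * k + 1 + 1) * ((2 * k + 1) * (2 * k)!) := ⟨2 * k + 1, by ring⟩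
lemma D_dvd {n k : ℕ} (h : 2 * k ≤ n) : (n - 2 * k)! * 2 ^ k * k ! ∣ n ! := by
  have h1 : (2 * k)! * (n - 2 * k)! ∣ n ! := Nat.factorial_mul_factorial_dvd_factorial h
  calc (n - 2 * k)! * 2 ^ k * k ! = (n - 2 * k)! * (2 ^ k * k !) := by ring
  _ ∣ (n - 2 * k)! * (2 * k)! := mul_dvd_mul_left _ (two_pow_mul_factorial_dvd k)
  _ ∣ n ! := by rwa [mul_comm] at h1
lemma D_cast {n k : ℕ} (h : 2 * k ≤ n) :
    (D n k : ℚ) = (n ! : ℚ) / ((n - 2 * k)! * 2 ^ k * k !) := by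
  rw [D, Nat.cast_div (D_dvd h) (by positivity)]
  push_cast; ring
lemma key_s11 {n m k : ℕ} (hk : k ≤ m) (h : 2 * m ≤ n) :
    D n k * D (n - 2 * k) (m - k) = D n m * m.choose k := by
  have hkn : 2 * k ≤ n := le_trans (by omega) h
  have hmk : 2 * (m - k) ≤ n - 2 * k := by omega
  have e1 : n - 2 * k - 2 * (m - k) = n - 2 * m := by omega
  have hc : (m.choose k : ℚ) * (k ! * (m - k)!) = m ! := by
    rw [← Nat.choose_mul_factorial_mul_factorial hk]; push_cast; ring
  have h2 : (2:ℚ) ^ k * 2 ^ (m - k) = 2 ^ m := by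
    rw [← pow_add]; congr 1; omega
  have := fun j : ℕ => Nat.factorial_pos j
  have goal : (↑(D n k * D (n - 2 * k) (m - k)) : ℚ) = ↑(D n m * m.choose k) := by
    push_cast
    rw [D_cast hkn, D_cast hmk, D_cast h, e1]
    have hne : ∀ j : ℕ, ((j ! : ℚ)) ≠ 0 := fun j => by positivity
    field_simp
    rw [← h2, ← hc]; ring
  exact_mod_cast goal

theorem hermite_inversion_identity (n m : ℕ) (hm : 1 ≤ m) (hmn : m ≤ n / 2) :
    ∑ k ∈ Finset.range (m + 1),
      (-1 : ℤ) ^ k * (D n k : ℤ) * (D (n - 2 * k) (m - k) : ℤ) = 0 := by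
  have h2m : 2 * m ≤ n := by omega
  have hterm : ∀ k ∈ Finset.range (m + 1),
      (-1 : ℤ) ^ k * (D n k : ℤ) * (D (n - 2 * k) (m - k) : ℤ)
        = (D n m : ℤ) * ((-1) ^ k * m.choose k) := by
    intro k hk
    rw [Finset.mem_range] at hk
    have h1 := key_s11 (Nat.lt_succ_iff.mp hk) h2m
    have h2 : (D n k : ℤ) * (D (n - 2 * k) (m - k) : ℤ) = (D n m : ℤ) * m.choose k := by
      exact_mod_cast congrArg (Nat.cast : ℕ → ℤ) h1
    rw [mul_assoc, h2]; ring
  rw [Finset.sum_congr rfl hterm, ← Finset.mul_sum, Int.alternating_sum_range_choose]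
  simp [Nat.one_le_iff_ne_zero.mp hm]
end
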